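/- Wavelet tree rank recursion: let T be a text over [0, 2^ℓ), let B be the bit vector of most-significant bits of T, and let T_0 (resp. T_1) be the subsequence of characters of T whose MSB is 0 (resp. 1), each with the MSB stripped. Then for any character α with MSB b and remaining bits α', and any position i, rank_α(i) over T equals rank_{α'}(rank_b(i)) over T_b, where rank_b(i) counts occurrences of bit b among the first i bits of B. -/

import Mathlib

/-- Rank of symbol `a` in the first `i` elements of the list `l`. -/
def lrank (l : List ℕ) (a : ℕ) (i : ℕ) : ℕ := (l.take i).count a

lemma lrank_aux (m : ℕ) (hm : 0 < m) (a : ℕ) : ∀ (l : List ℕ) (i : ℕ),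
    lrank l a i =
      lrank ((l.filter (fun c => c / m == a / m)).map (fun c => c % m)) (a % m)
        (lrank (l.map (fun c => c / m)) (a / m) i) := by
  intro l
  induction l with
  | nil => intro i; simp [lrank]
  | cons c l ih =>
    intro i
    cases i with
    | zero => simp [lrank]
    | succ k =>
      have key : (c = a) ↔ (c / m = a / m ∧ c % m = a % m) := by
        constructor
        · rintro rfl; exact ⟨rfl, rfl⟩
        · rintro ⟨h1, h2⟩
          have h3 : m * (a / m) + a % m = c := by
            rw [← h1, ← h2]; exact Nat.div_add_mod c m
          have h4 := Nat.div_add_mod a m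
          omega
      simp only [lrank] at ih ⊢
      by_cases hb : c / m = a / m
      · have hc : (c = a) ↔ (c % m = a % m) := by rw [key]; tauto
        simp only [List.take_succ_cons, List.count_cons, List.map_cons,
          List.filter_cons, hb, beq_self_eq_true, if_true, ih k]
        by_cases hca : c = a
        · simp [hca, hc.mp hca]
        · have : ¬ (c % m = a % m) := fun h => hca (hc.mpr h)
          simp [hca, this]
      · have hca : c ≠ a := fun h => hb (by rw [h])
        simp only [List.take_succ_cons, List.count_cons, List.map_cons,
          List.filter_cons, ih k]
        simp [hca, hb]

/-- Wavelet tree rank recursion: for a text `T` over `[0, 2^ℓ)`, `B` the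
sequence of most-significant bits, `T_b` the stable subsequence of characters
with MSB `b` with the MSB stripped, and a character `α` with MSB `b` and
remaining bits `α'`: `rank_α(i)` over `T` equals `rank_{α'}(rank_b(i))` over
`T_b`. -/
theorem wavelet_tree_rank_recursion (ℓ n : ℕ) (hℓ : 1 ≤ ℓ)
    (T : Fin n → Fin (2 ^ ℓ)) (α : Fin (2 ^ ℓ)) (i : ℕ) :
    let tl : List ℕ := (List.ofFn T).map (fun c => (c : ℕ))
    let b : ℕ := (α : ℕ) / 2 ^ (ℓ - 1)
    let B : List ℕ := tl.map (fun c => c / 2 ^ (ℓ - 1))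
    let Tb : List ℕ :=
      (tl.filter (fun c => c / 2 ^ (ℓ - 1) == b)).map (fun c => c % 2 ^ (ℓ - 1))
    lrank tl (α : ℕ) i = lrank Tb ((α : ℕ) % 2 ^ (ℓ - 1)) (lrank B b i) := by
  intro tl b B Tb
  exact lrank_aux (2 ^ (ℓ - 1)) (Nat.pow_pos (by norm_num)) (α : ℕ) tl i
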